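/- The first-integral identity ρ'(y)² = ρ(y)² − (2/3) ρ(y)³ holds for all y ∈ ℝ. -/

import Mathlib

open Real

/-- The spike profile `ρ(y) = (3/2) sech²(y/2)`. -/
noncomputable def rho (y : ℝ) : ℝ := (3/2) * (1 / Real.cosh (y/2))^2

lemma rho_hasDerivAt (y : ℝ) :
    HasDerivAt rho (-(3/2) * Real.sinh (y/2) / (Real.cosh (y/2))^3) y := by
  have hc : Real.cosh (y/2) ≠ 0 := (Real.cosh_pos (y/2)).ne'
  have h1 : HasDerivAt (fun y : ℝ => Real.cosh (y/2)) (Real.sinh (y/2) * (1/2)) y := by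
    simpa [Function.comp_def] using (Real.hasDerivAt_cosh (y/2)).comp y
      ((hasDerivAt_id y).div_const 2)
  have h2 := (((hasDerivAt_const y (1:ℝ)).div h1 hc).pow 2).const_mul (3/2 : ℝ)
  convert (show HasDerivAt rho _ y from h2) using 1
  simp only [Pi.div_apply, Nat.reduceSub, pow_one]
  field_simp
  ring

/-- The first-integral identity `ρ'(y)² = ρ(y)² − (2/3)ρ(y)³` for all `y`. -/
theorem stmt_4 : ∀ y : ℝ, (deriv rho y)^2 = (rho y)^2 - (2/3) * (rho y)^3 := by
  intro y
  rw [(rho_hasDerivAt y).deriv]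
  have hc : Real.cosh (y/2) ≠ 0 := (Real.cosh_pos (y/2)).ne'
  have hs : (Real.sinh (y/2))^2 = (Real.cosh (y/2))^2 - 1 := by
    have := Real.cosh_sq_sub_sinh_sq (y/2); nlinarith
  unfold rho
  field_simp
  linear_combination hs
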